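/- arXiv:2107.01587 — 3 statements merged into one kernel-verified Lean document; each statement's English description precedes it below -/
import Mathlib

section
/- Let G be a locally compact abelian topological group with a Haar measure μ, and let m be a cosine multiplicative functional on L¹(G, μ). Then there exists an even function g ∈ L¹(G, μ) (i.e., g(−x) = g(x) for μ-a.e. x) with m(g) ≠ 0. -/
open MeasureTheory

/-- The cosine convolution `(f ⋆_c g)(x) = ∫ f(y) (g(x+y) + g(x-y))/2 dμ(y)`. -/
noncomputable def cosConv {G : Type*} [AddCommGroup G] [MeasurableSpace G]
    (μ : Measure G) (f g : G → ℂ) : G → ℂ :=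
  fun x => ∫ y, f y * (g (x + y) + g (x - y)) / 2 ∂μ

/-- A cosine multiplicative functional on `L¹(G, μ)`: a nonzero continuous linear
functional `m` with `m(f ⋆_c g) = m(f) m(g)` for all `f, g ∈ L¹(G, μ)`. -/
def IsCosineMulFunctional {G : Type*} [AddCommGroup G] [MeasurableSpace G]
    (μ : Measure G) (m : Lp ℂ 1 μ →L[ℂ] ℂ) : Prop :=
  m ≠ 0 ∧ ∀ (f g : Lp ℂ 1 μ) (h : Integrable (cosConv μ (f : G → ℂ) (g : G → ℂ)) μ),
    m (h.toL1 _) = m f * m g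

/-- Every cosine multiplicative functional on `L¹(G, μ)` is nonzero on
some even integrable function. -/
theorem exists_even_ne_zero {G : Type*} [AddCommGroup G] [TopologicalSpace G]
    [IsTopologicalAddGroup G] [LocallyCompactSpace G] [T2Space G]
    [MeasurableSpace G] [BorelSpace G]
    (μ : Measure G) [μ.IsAddHaarMeasure] [μ.Regular]
    (m : Lp ℂ 1 μ →L[ℂ] ℂ) (hm : IsCosineMulFunctional μ m) :
    ∃ (g : G → ℂ) (hg : Integrable g μ),
      (∀ᵐ x ∂μ, g (-x) = g x) ∧ m (hg.toL1 g) ≠ 0 := by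
  obtain ⟨F, hF⟩ := DFunLike.ne_iff.1 hm.1
  simp only [ContinuousLinearMap.zero_apply] at hF
  set f₀ : G → ℂ := (F : G → ℂ) with hf₀def
  have hf₀ : Integrable f₀ μ := L1.integrable_coeFn F
  have hfneg : Integrable (fun y => f₀ (-y)) μ := hf₀.comp_neg
  set g : G → ℂ := fun y => (f₀ y + f₀ (-y)) / 2 with hgdef
  set h : G → ℂ := fun y => (f₀ y - f₀ (-y)) / 2 with hhdef
  have hg : Integrable g μ := (hf₀.add hfneg).div_const 2
  have hh : Integrable h μ := (hf₀.sub hfneg).div_const 2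
  set H : Lp ℂ 1 μ := hh.toL1 h with hHdef
  -- the cosine convolution of the odd part with anything vanishes identically
  have hconv : cosConv μ (H : G → ℂ) (F : G → ℂ) = fun _ => (0 : ℂ) := by
    funext x
    have hae : (H : G → ℂ) =ᵐ[μ] h := hh.coeFn_toL1
    have e1 : cosConv μ (H : G → ℂ) (F : G → ℂ) x
        = ∫ y, h y * (f₀ (x + y) + f₀ (x - y)) / 2 ∂μ := by
      refine integral_congr_ae (hae.mono fun y hy => ?_)
      dsimp only
      rw [hy]
    rw [e1]
    set M : G → ℂ := fun y => h y * (f₀ (x + y) + f₀ (x - y)) / 2 with hMdef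
    have hmodd : ∀ y, M (-y) = -M y := by
      intro y
      simp only [hMdef, hhdef, sub_neg_eq_add, ← sub_eq_add_neg, neg_neg]
      ring
    have e2 : ∫ y, M y ∂μ = -∫ y, M y ∂μ := by
      conv_lhs => rw [← integral_neg_eq_self M μ]
      simp_rw [hmodd]
      exact integral_neg _
    have hz : ∫ y, M y ∂μ = 0 := by linear_combination e2 / 2
    exact hz
  have hInt : Integrable (cosConv μ (H : G → ℂ) (F : G → ℂ)) μ := by
    rw [hconv]; exact integrable_zero _ _ _
  have key := hm.2 H F hInt
  have hL : hInt.toL1 _ = (0 : Lp ℂ 1 μ) := by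
    simp only [hconv]
    exact Integrable.toL1_zero _
  rw [hL, map_zero] at key
  have hmH : m H = 0 := by
    rcases mul_eq_zero.1 key.symm with h1 | h1
    · exact h1
    · exact absurd h1 hF
  have hgh : g + h = f₀ := by
    funext y; simp only [Pi.add_apply, hgdef, hhdef]; ring
  have hsum : hg.toL1 g + hh.toL1 h = F := by
    rw [← Integrable.toL1_add g h hg hh]
    have : (hg.add hh).toL1 (g + h) = hf₀.toL1 f₀ := by simp only [hgh]
    rw [this, Integrable.toL1_coeFn]
  refine ⟨g, hg, Filter.Eventually.of_forall fun x => ?_, ?_⟩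
  · simp only [hgdef, neg_neg]; ring
  · have : m (hg.toL1 g) = m F - m H := by
      rw [← hsum, map_add]; ring
    rw [this, hmH, sub_zero]
    exact hF
end

section
/- Let y* ∈ [0, ∞) and let (y_n) be a sequence in [0, ∞) that is unbounded. Then for every ε > 0 the sequence n ↦ sup_{x ∈ [0, ε]} |cos(2π y_n x) − cos(2π y* x)| does not converge to zero. -/
open Filter Real

/-- If `y* ≥ 0` and `(y_n) ⊂ [0, ∞)` is unbounded, then for every
`ε > 0` the sequence `n ↦ sup_{x ∈ [0, ε]} |cos(2π y_n x) − cos(2π y* x)|` does not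
converge to zero. -/
theorem sup_cos_dist_not_tendsto_zero (ystar : ℝ) (hystar : 0 ≤ ystar)
    (y : ℕ → ℝ) (hy : ∀ n, 0 ≤ y n) (hunb : ∀ C : ℝ, ∃ n, C < y n) :
    ∀ ε > (0 : ℝ),
      ¬ Tendsto (fun n => ⨆ x : Set.Icc (0 : ℝ) ε,
          |Real.cos (2 * π * y n * x) - Real.cos (2 * π * ystar * x)|)
        atTop (nhds 0) := by
  intro ε hε h
  have h1 : ∀ᶠ n in atTop, (⨆ x : Set.Icc (0 : ℝ) ε,
      |Real.cos (2 * π * y n * x) - Real.cos (2 * π * ystar * x)|) < 1 :=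
    h.eventually (gt_mem_nhds (by norm_num : (0:ℝ) < 1))
  obtain ⟨N, hN⟩ := eventually_atTop.mp h1
  obtain ⟨M, hM⟩ := ((Set.finite_Iio N).image y).bddAbove
  obtain ⟨n, hn⟩ := hunb (max (max M (2 * (ystar + 1))) (1 / (2 * ε)))
  have hM' : M < y n := lt_of_le_of_lt (le_trans (le_max_left _ _) (le_max_left _ _)) hn
  have hyst : 2 * (ystar + 1) < y n :=
    lt_of_le_of_lt (le_trans (le_max_right _ _) (le_max_left _ _)) hn
  have hinv : 1 / (2 * ε) < y n := lt_of_le_of_lt (le_max_right _ _) hn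
  have hnN : N ≤ n := by
    by_contra hc
    push_neg at hc
    exact absurd (hM ⟨n, hc, rfl⟩) (not_le.mpr hM')
  have hypos : 0 < y n := lt_of_lt_of_le (by positivity) hyst.le
  set x0 : ℝ := 1 / (2 * y n) with hx0def
  have hx0pos : 0 < x0 := by positivity
  have hx0le : x0 ≤ ε := by
    rw [hx0def, div_le_iff₀ (by positivity)]
    rw [div_lt_iff₀ (by positivity)] at hinv
    linarith
  have hx0mem : x0 ∈ Set.Icc (0 : ℝ) ε := ⟨hx0pos.le, hx0le⟩
  -- value at x0
  have hcos1 : Real.cos (2 * π * y n * x0) = -1 := by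
    have : 2 * π * y n * x0 = π := by
      field_simp [hx0def]
      rw [hx0def]; field_simp [hypos.ne']
    rw [this, Real.cos_pi]
  have hcos2 : 0 ≤ Real.cos (2 * π * ystar * x0) := by
    apply Real.cos_nonneg_of_mem_Icc
    constructor
    · have : 0 ≤ 2 * π * ystar * x0 := by positivity
      linarith [Real.pi_pos]
    · have hπ := Real.pi_pos
      rw [hx0def]
      rw [show 2 * π * ystar * (1 / (2 * y n)) = π * (ystar / y n) by
        field_simp]
      have : ystar / y n ≤ 1 / 2 := by
        rw [div_le_div_iff₀ hypos (by norm_num)]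
        linarith
      nlinarith
  have hval : (1 : ℝ) ≤ |Real.cos (2 * π * y n * x0) - Real.cos (2 * π * ystar * x0)| := by
    rw [hcos1, abs_sub_comm, abs_of_nonneg (by linarith)]
    linarith
  have hbdd : BddAbove (Set.range fun x : Set.Icc (0 : ℝ) ε =>
      |Real.cos (2 * π * y n * x) - Real.cos (2 * π * ystar * x)|) := by
    refine ⟨2, ?_⟩
    rintro _ ⟨x, rfl⟩
    have h1 := Real.abs_cos_le_one (2 * π * y n * x)
    have h2 := Real.abs_cos_le_one (2 * π * ystar * x)
    rw [abs_le] at h1 h2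
    rw [abs_le]
    constructor <;> linarith
  have hsup : (1 : ℝ) ≤ ⨆ x : Set.Icc (0 : ℝ) ε,
      |Real.cos (2 * π * y n * x) - Real.cos (2 * π * ystar * x)| :=
    le_trans hval (le_ciSup hbdd ⟨x0, hx0mem⟩)
  exact absurd (hN n hnN) (not_lt.mpr hsup)
end

section
/- Let n ≥ 1 be a natural number and consider ℓ¹(ℤ/nℤ) = (ℂ^{ℤ/nℤ}, ‖·‖₁) with counting measure, so that (f ⋆_c g)(x) = Σ_{y ∈ ℤ/nℤ} f(y)·(g(x+y) + g(x−y))/2. For l ∈ {0, 1, …, ⌈(n+1)/2⌉ − 1}, define m_l(f) = Σ_{k=0}^{n−1} f(k)·cos(2πlk/n). Then the functionals m_l are pairwise distinct, each m_l is a cosine multiplicative functional on ℓ¹(ℤ/nℤ), and every cosine multiplicative functional on ℓ¹(ℤ/nℤ) equals m_l for some l ∈ {0, 1, …, ⌈(n+1)/2⌉ − 1}. In particular, Δ(ℓ¹(ℤ/nℤ), ⋆_c) has exactly ⌈(n+1)/2⌉ elements, where ⌈·⌉ is the ceiling function. -/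
open MeasureTheory Real

/-- `ℤ/nℤ` carries the discrete (i.e. `⊤`) σ-algebra. -/
instance (n : ℕ) : MeasurableSpace (ZMod n) := ⊤

set_option linter.unusedSectionVars false

namespace CosAux

variable {n : ℕ} [NeZero n]

omit [NeZero n] in
lemma eq_of_ae_eq {f g : ZMod n → ℂ} (h : f =ᵐ[Measure.count] g) : f = g := by
  funext x
  by_contra hx
  rw [Filter.EventuallyEq, ae_iff] at h
  have h2 : (Measure.count : Measure (ZMod n)) {x} = 0 :=
    measure_mono_null (fun y hy => by simpa using hy.symm ▸ hx) h
  simp [Measure.count_singleton] at h2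

lemma integral_eq_sum (f : ZMod n → ℂ) :
    ∫ x, f x ∂(Measure.count : Measure (ZMod n)) = ∑ x, f x := by
  rw [integral_fintype .of_finite]; simp [Measure.count_singleton]

noncomputable def toLp1 (f : ZMod n → ℂ) : Lp ℂ 1 (Measure.count : Measure (ZMod n)) :=
  MemLp.toLp f .of_discrete

lemma coe_toLp1 (f : ZMod n → ℂ) : ((toLp1 f : Lp ℂ 1 (Measure.count : Measure (ZMod n))) : ZMod n → ℂ) = f :=
  eq_of_ae_eq (MemLp.coeFn_toLp _)

lemma toLp1_coe (f : Lp ℂ 1 (Measure.count : Measure (ZMod n))) : toLp1 (f : ZMod n → ℂ) = f :=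
  Lp.toLp_coeFn f .of_discrete

lemma coe_injective : Function.Injective
    (fun f : Lp ℂ 1 (Measure.count : Measure (ZMod n)) => (f : ZMod n → ℂ)) :=
  fun f g h => by rw [← toLp1_coe f, ← toLp1_coe g]; simp only [h]

lemma coe_add (f g : Lp ℂ 1 (Measure.count : Measure (ZMod n))) :
    ((f + g : Lp ℂ 1 _) : ZMod n → ℂ) = (f : ZMod n → ℂ) + g :=
  eq_of_ae_eq (Lp.coeFn_add f g)

lemma coe_smul (c : ℂ) (f : Lp ℂ 1 (Measure.count : Measure (ZMod n))) :
    ((c • f : Lp ℂ 1 _) : ZMod n → ℂ) = c • (f : ZMod n → ℂ) :=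
  eq_of_ae_eq (Lp.coeFn_smul c f)

lemma norm_eq_sum (f : Lp ℂ 1 (Measure.count : Measure (ZMod n))) :
    ‖f‖ = ∑ k, ‖(f : ZMod n → ℂ) k‖ := by
  rw [Lp.norm_def, eLpNorm_one_eq_lintegral_enorm, MeasureTheory.lintegral_count, tsum_fintype,
    ENNReal.toReal_sum (by intro a _; exact enorm_ne_top)]
  simp



/-- The functional `f ↦ ∑ k, f k * φ k` for a `φ` bounded by 1. -/
noncomputable def fnl (φ : ZMod n → ℂ) (hφ : ∀ k, ‖φ k‖ ≤ 1) :
    Lp ℂ 1 (Measure.count : Measure (ZMod n)) →L[ℂ] ℂ :=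
  LinearMap.mkContinuous
    { toFun := fun f => ∑ k, (f : ZMod n → ℂ) k * φ k
      map_add' := by
        intro f g
        simp only [coe_add, Pi.add_apply, add_mul, Finset.sum_add_distrib]
      map_smul' := by
        intro c f
        simp only [coe_smul, Pi.smul_apply, smul_eq_mul, RingHom.id_apply, Finset.mul_sum,
          mul_assoc] }
    1 (by
      intro f
      simp only [LinearMap.coe_mk, AddHom.coe_mk, one_mul]
      calc ‖∑ k, (f : ZMod n → ℂ) k * φ k‖ ≤ ∑ k, ‖(f : ZMod n → ℂ) k * φ k‖ :=
            norm_sum_le _ _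
        _ ≤ ∑ k, ‖(f : ZMod n → ℂ) k‖ := by
            refine Finset.sum_le_sum fun k _ => ?_
            rw [norm_mul]
            exact mul_le_of_le_one_right (norm_nonneg _) (hφ k)
        _ = ‖f‖ := (norm_eq_sum f).symm)

lemma fnl_apply (φ : ZMod n → ℂ) (hφ : ∀ k, ‖φ k‖ ≤ 1)
    (f : Lp ℂ 1 (Measure.count : Measure (ZMod n))) :
    fnl φ hφ f = ∑ k, (f : ZMod n → ℂ) k * φ k := rfl

/-- The delta function at `k` as an element of `L¹`. -/
noncomputable def delta (k : ZMod n) : Lp ℂ 1 (Measure.count : Measure (ZMod n)) :=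
  toLp1 (fun x => if x = k then 1 else 0)

lemma coe_delta (k : ZMod n) : ((delta k : Lp ℂ 1 (Measure.count : Measure (ZMod n))) : ZMod n → ℂ)
    = fun x => if x = k then 1 else 0 := coe_toLp1 _

lemma fnl_delta (φ : ZMod n → ℂ) (hφ : ∀ k, ‖φ k‖ ≤ 1) (k : ZMod n) :
    fnl φ hφ (delta k) = φ k := by
  rw [fnl_apply, coe_delta]
  simp [ite_mul]

/-- Coercion as a linear map. -/
noncomputable def coeL : Lp ℂ 1 (Measure.count : Measure (ZMod n)) →ₗ[ℂ] (ZMod n → ℂ) where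
  toFun f := (f : ZMod n → ℂ)
  map_add' := coe_add
  map_smul' := coe_smul

/-- Every continuous linear functional is determined by its values on deltas. -/
lemma repr (m : Lp ℂ 1 (Measure.count : Measure (ZMod n)) →L[ℂ] ℂ)
    (f : Lp ℂ 1 (Measure.count : Measure (ZMod n))) :
    m f = ∑ k, (f : ZMod n → ℂ) k * m (delta k) := by
  have hf : f = ∑ k, (f : ZMod n → ℂ) k • delta k := by
    apply coe_injective
    show coeL f = coeL _
    rw [map_sum]
    funext x
    simp only [Finset.sum_apply, Pi.smul_apply]
    have : ∀ k, (coeL (n := n)) ((f : ZMod n → ℂ) k • delta k) x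
        = (f : ZMod n → ℂ) k * (if x = k then 1 else 0) := by
      intro k
      rw [_root_.map_smul]
      simp only [Pi.smul_apply, smul_eq_mul]
      show _ * ((delta k : Lp ℂ 1 (Measure.count : Measure (ZMod n))) : ZMod n → ℂ) x = _
      rw [congrFun (coe_delta k) x]
    simp only [this, mul_ite, mul_one, mul_zero, Finset.sum_ite_eq, Finset.mem_univ, if_true]
    rfl
  conv_lhs => rw [hf]
  rw [map_sum]
  simp only [_root_.map_smul, smul_eq_mul]



/-- The cosine character values. -/
noncomputable def C (n : ℕ) (l : ℕ) (k : ZMod n) : ℂ :=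
  ((Real.cos (2 * π * l * (ZMod.val k) / n) : ℝ) : ℂ)

lemma C_norm_le (l : ℕ) (k : ZMod n) : ‖C n l k‖ ≤ 1 := by
  rw [C, Complex.norm_real, Real.norm_eq_abs]
  exact Real.abs_cos_le_one _

lemma C_zero (l : ℕ) : C n l 0 = 1 := by
  simp [C]

/-- `z^(val k)` for an `n`-th root of unity `z`, as a function of `k : ZMod n`. -/
noncomputable def E (n : ℕ) (z : ℂ) (k : ZMod n) : ℂ := z ^ (ZMod.val k)

lemma pow_val_mod (z : ℂ) (hz : z ^ n = 1) (a : ℕ) : z ^ (a % n) = z ^ a := by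
  conv_rhs => rw [← Nat.mod_add_div a n]
  rw [pow_add, pow_mul, hz, one_pow, mul_one]

lemma E_add (z : ℂ) (hz : z ^ n = 1) (x y : ZMod n) : E n z (x + y) = E n z x * E n z y := by
  rw [E, E, E, ZMod.val_add, pow_val_mod z hz, pow_add]

lemma E_ne_zero (z : ℂ) (hz : z ^ n = 1) (k : ZMod n) : E n z k ≠ 0 := by
  intro h
  rw [E, pow_eq_zero_iff'] at h
  rcases h with ⟨rfl, -⟩
  rw [zero_pow (NeZero.ne n)] at hz
  exact zero_ne_one hz

lemma E_neg (z : ℂ) (hz : z ^ n = 1) (y : ZMod n) : E n z (-y) = (E n z y)⁻¹ := by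
  have h := E_add z hz (-y) y
  rw [neg_add_cancel] at h
  have h0 : E n z 0 = 1 := by simp [E]
  field_simp [E_ne_zero z hz y] at h ⊢
  rw [← h, h0]

/-- The `d'Alembert` cosine identity for `Cz z = (E z + (E z)⁻¹)/2`. -/
lemma Cz_identity (z : ℂ) (hz : z ^ n = 1) (x y : ZMod n) :
    (E n z (x + y) + (E n z (x + y))⁻¹) / 2 + (E n z (x - y) + (E n z (x - y))⁻¹) / 2
      = 2 * ((E n z x + (E n z x)⁻¹) / 2) * ((E n z y + (E n z y)⁻¹) / 2) := by
  have hxy : E n z (x + y) = E n z x * E n z y := E_add z hz x y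
  have hxy' : E n z (x - y) = E n z x * (E n z y)⁻¹ := by
    rw [sub_eq_add_neg, E_add z hz, E_neg z hz]
  have hx := E_ne_zero z hz x
  have hy := E_ne_zero z hz y
  rw [hxy, hxy']
  field_simp
  ring

/-- `C n l` is such a `Cz` for `z = exp(2πI l/n)`. -/
lemma C_eq (l : ℕ) (k : ZMod n) :
    C n l k = (E n (Complex.exp (2 * π * Complex.I * l / n)) k
      + (E n (Complex.exp (2 * π * Complex.I * l / n)) k)⁻¹) / 2 := by
  rw [C, E, ← Complex.exp_nat_mul, ← Complex.exp_neg]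
  rw [Complex.ofReal_cos, Complex.cos]
  congr 2
  · push_cast
    ring
  · push_cast
    ring

lemma exp_pow_n (l : ℕ) : (Complex.exp (2 * π * Complex.I * l / n)) ^ n = 1 := by
  rw [← Complex.exp_nat_mul]
  have : (n : ℂ) ≠ 0 := Nat.cast_ne_zero.mpr (NeZero.ne n)
  rw [show (n : ℂ) * (2 * π * Complex.I * l / n) = l * (2 * π * Complex.I) by field_simp]
  exact Complex.exp_nat_mul_two_pi_mul_I l

lemma C_identity (l : ℕ) (x y : ZMod n) :
    C n l (x + y) + C n l (x - y) = 2 * C n l x * C n l y := by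
  rw [C_eq l (x+y), C_eq l (x-y), C_eq l x, C_eq l y]
  exact Cz_identity _ (exp_pow_n l) x y



lemma conv_sum (l : ℕ) (f g : ZMod n → ℂ) :
    ∑ x, (cosConv Measure.count f g x) * C n l x
      = (∑ k, f k * C n l k) * (∑ k, g k * C n l k) := by
  have hc : ∀ x, cosConv Measure.count f g x = ∑ y, f y * (g (x + y) + g (x - y)) / 2 :=
    fun x => integral_eq_sum _
  calc ∑ x, (cosConv Measure.count f g x) * C n l x
      = ∑ x, ∑ y, f y * (g (x + y) + g (x - y)) / 2 * C n l x := by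
        simp only [hc, Finset.sum_mul]
    _ = ∑ y, ∑ x, f y * (g (x + y) + g (x - y)) / 2 * C n l x := Finset.sum_comm
    _ = ∑ y, f y * C n l y * (∑ u, g u * C n l u) := by
        refine Finset.sum_congr rfl fun y _ => ?_
        have h1 : ∑ x, g (x + y) * C n l x = ∑ u, g u * C n l (u - y) :=
          Fintype.sum_equiv (Equiv.addRight y) _ _ (fun x => by simp)
        have h2 : ∑ x, g (x - y) * C n l x = ∑ u, g u * C n l (u + y) :=
          Fintype.sum_equiv (Equiv.subRight y) _ _ (fun x => by simp)
        calc ∑ x, f y * (g (x + y) + g (x - y)) / 2 * C n l x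
            = f y / 2 * ((∑ x, g (x + y) * C n l x) + ∑ x, g (x - y) * C n l x) := by
              rw [← Finset.sum_add_distrib, Finset.mul_sum]
              exact Finset.sum_congr rfl fun x _ => by ring
          _ = f y / 2 * (∑ u, g u * (C n l (u - y) + C n l (u + y))) := by
              rw [h1, h2, ← Finset.sum_add_distrib]
              congr 1
              exact Finset.sum_congr rfl fun u _ => by ring
          _ = f y * C n l y * (∑ u, g u * C n l u) := by
              rw [Finset.mul_sum, Finset.mul_sum]
              refine Finset.sum_congr rfl fun u _ => ?_
              rw [show C n l (u - y) + C n l (u + y) = 2 * C n l u * C n l y by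
                rw [add_comm]; exact C_identity l u y]
              ring
    _ = (∑ k, f k * C n l k) * (∑ k, g k * C n l k) := by rw [← Finset.sum_mul]

lemma isCos_fnl_C (l : ℕ) :
    IsCosineMulFunctional Measure.count (fnl (C n l) (C_norm_le l)) := by
  constructor
  · intro h0
    have h := fnl_delta (C n l) (C_norm_le l) 0
    rw [h0] at h
    rw [C_zero] at h
    simp at h
  · intro f g h
    have hcoe : ((h.toL1 _ : Lp ℂ 1 (Measure.count : Measure (ZMod n))) : ZMod n → ℂ)
        = cosConv Measure.count (f : ZMod n → ℂ) (g : ZMod n → ℂ) := eq_of_ae_eq h.coeFn_toL1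
    rw [fnl_apply, fnl_apply, fnl_apply, hcoe]
    exact conv_sum l _ _



lemma exists_char (m : Lp ℂ 1 (Measure.count : Measure (ZMod n)) →L[ℂ] ℂ)
    (hm : IsCosineMulFunctional Measure.count m) :
    ∃ l : ℕ, l < n ∧ ∀ k, m (delta k) = C n l k := by
  classical
  set φ : ZMod n → ℂ := fun k => m (delta k) with hφdef
  have hFE : ∀ x y : ZMod n, φ (y - x) + φ (y + x) = 2 * φ x * φ y := by
    intro x y
    have hint : Integrable (cosConv Measure.count
        ((delta x : Lp ℂ 1 (Measure.count : Measure (ZMod n))) : ZMod n → ℂ)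
        ((delta y : Lp ℂ 1 (Measure.count : Measure (ZMod n))) : ZMod n → ℂ))
        Measure.count := .of_finite
    have hmul := hm.2 (delta x) (delta y) hint
    have hcoe : ((hint.toL1 _ : Lp ℂ 1 (Measure.count : Measure (ZMod n))) : ZMod n → ℂ)
        = cosConv Measure.count _ _ := eq_of_ae_eq hint.coeFn_toL1
    rw [repr m, hcoe] at hmul
    have e1 : ∀ u : ZMod n, (u + x = y) ↔ (u = y - x) := fun u => eq_sub_iff_add_eq.symm
    have e2 : ∀ u : ZMod n, (u - x = y) ↔ (u = y + x) := fun u => sub_eq_iff_eq_add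
    have hconv : ∀ u, cosConv Measure.count
        ((delta x : Lp ℂ 1 (Measure.count : Measure (ZMod n))) : ZMod n → ℂ)
        ((delta y : Lp ℂ 1 (Measure.count : Measure (ZMod n))) : ZMod n → ℂ) u
        = ((if u = y - x then 1 else 0) + (if u = y + x then 1 else 0)) / 2 := by
      intro u
      show ∫ v, _ ∂(Measure.count) = _
      rw [integral_eq_sum]
      simp only [coe_delta, ite_mul, one_mul, zero_mul]
      rw [← Finset.sum_div, Finset.sum_ite_eq' Finset.univ x]
      simp [e1, e2]
    simp only [hconv] at hmul
    have hsplit : ∀ u : ZMod n, ((if u = y - x then (1:ℂ) else 0)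
        + (if u = y + x then 1 else 0)) / 2 * φ u
        = (if u = y - x then φ u / 2 else 0) + (if u = y + x then φ u / 2 else 0) := by
      intro u; split_ifs <;> ring
    change ∑ u, _ * φ u = φ x * φ y at hmul
    simp only [hsplit, Finset.sum_add_distrib, Finset.sum_ite_eq', Finset.mem_univ,
      if_true] at hmul
    linear_combination 2 * hmul
  have hφmne : φ ≠ 0 → True := fun _ => trivial
  have hφne : ∃ k, φ k ≠ 0 := by
    by_contra hc
    push_neg at hc
    refine hm.1 (ContinuousLinearMap.ext fun f => ?_)
    have hc' : ∀ k, m (delta k) = 0 := hc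
    rw [repr m f]
    simp [hc']
  have hφ0 : φ 0 = 1 := by
    have h00 := hFE 0 0
    simp only [sub_zero, add_zero] at h00
    have : φ 0 * (φ 0 - 1) = 0 := by linear_combination -h00 / 2
    rcases mul_eq_zero.mp this with h | h
    · exfalso
      obtain ⟨k, hk⟩ := hφne
      have hk0 := hFE 0 k
      simp only [sub_zero, add_zero, h] at hk0
      exact hk (by linear_combination hk0 / 2)
    · linear_combination h
  -- the Chebyshev-type recursion
  set a : ℂ := φ 1 with ha
  obtain ⟨w, hw⟩ := IsAlgClosed.exists_pow_nat_eq (k := ℂ) (a ^ 2 - 1) zero_lt_two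
  set z : ℂ := a + w with hzdef
  have hz1 : z * (2 * a - z) = 1 := by
    have hw2 : w ^ 2 = a ^ 2 - 1 := hw
    rw [hzdef]
    linear_combination -hw2
  have hzne : z ≠ 0 := left_ne_zero_of_mul_eq_one hz1
  have hzinv : z⁻¹ = 2 * a - z := inv_eq_of_mul_eq_one_right hz1
  have hsum : z + z⁻¹ = 2 * a := by rw [hzinv]; ring
  have hrec : ∀ k : ℕ, φ ((k : ZMod n) + 1 + 1) = 2 * a * φ ((k : ZMod n) + 1) - φ (k : ZMod n) := by
    intro k
    have h := hFE 1 ((k : ZMod n) + 1)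
    rw [add_sub_cancel_right] at h
    linear_combination h
  have key : ∀ k : ℕ, φ (k : ZMod n) = (z ^ k + z⁻¹ ^ k) / 2 := by
    intro k
    induction k using Nat.twoStepInduction with
    | zero => simp only [Nat.cast_zero, pow_zero]; rw [hφ0]; norm_num
    | one =>
      simp only [Nat.cast_one, pow_one]
      rw [hsum]
      ring
    | more k ih1 ih2 =>
      have h := hrec k
      rw [show ((k : ZMod n) + 1 + 1) = ((k + 2 : ℕ) : ZMod n) by push_cast; ring,
        show ((k : ZMod n) + 1) = ((k + 1 : ℕ) : ZMod n) by push_cast; ring] at h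
      rw [h, ih1, ih2]
      have h2 : z * z⁻¹ = 1 := mul_inv_cancel₀ hzne
      linear_combination (-(z ^ (k+1) + z⁻¹ ^ (k+1)) / 2) * hsum + ((z ^ k + z⁻¹ ^ k) / 2) * h2
  have hzn : z ^ n = 1 := by
    have h1 : φ ((n : ℕ) : ZMod n) = 1 := by rw [ZMod.natCast_self]; exact hφ0
    have h2 := key n
    rw [h1] at h2
    have h2' : z ^ n + z⁻¹ ^ n = 2 := by linear_combination -2 * h2
    have h3 : z ^ n * z⁻¹ ^ n = 1 := by rw [← mul_pow, mul_inv_cancel₀ hzne, one_pow]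
    have h4 : (z ^ n - 1) ^ 2 = 0 := by linear_combination (z ^ n) * h2' - h3
    have h5 : z ^ n - 1 = 0 := by
      have := pow_eq_zero_iff (n := 2) (by norm_num) |>.mp h4
      exact this
    linear_combination h5
  obtain ⟨l, hl, hzl⟩ := (Complex.isPrimitiveRoot_exp n (NeZero.ne n)).eq_pow_of_pow_eq_one hzn
  refine ⟨l, hl, fun k => ?_⟩
  have hk : ((ZMod.val k : ℕ) : ZMod n) = k := by
    simp [ZMod.natCast_val, ZMod.cast_id]
  have hkey := key (ZMod.val k)
  rw [hk] at hkey
  have hze : Complex.exp (2 * π * Complex.I * l / n) = z := by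
    rw [← hzl, ← Complex.exp_nat_mul]
    congr 1
    ring
  rw [show m (delta k) = φ k from rfl, hkey, C_eq l k, E, hze, inv_pow]

lemma C_reduce (l : ℕ) (hl : l < n) :
    ∃ l' : ℕ, l' < n / 2 + 1 ∧ ∀ k, C n l' k = C n l k := by
  by_cases h : l ≤ n / 2
  · exact ⟨l, by omega, fun k => rfl⟩
  · refine ⟨n - l, by omega, fun k => ?_⟩
    rw [C, C]
    congr 1
    have hn : (n : ℝ) ≠ 0 := Nat.cast_ne_zero.mpr (NeZero.ne n)
    have harg : 2 * π * ((n : ℝ) - l) * (ZMod.val k) / n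
        = ((ZMod.val k : ℤ) : ℝ) * (2 * π) - 2 * π * l * (ZMod.val k) / n := by
      push_cast
      field_simp
    rw [Nat.cast_sub hl.le, harg, Real.cos_int_mul_two_pi_sub]

lemma ceil_eq (n : ℕ) [NeZero n] : ⌈((n : ℚ) + 1) / 2⌉₊ = n / 2 + 1 := by
  rcases Nat.even_or_odd n with ⟨m, hm⟩ | ⟨m, hm⟩
  · subst hm
    rw [show (m + m) / 2 = m from by omega, Nat.ceil_eq_iff (by omega)]
    constructor
    · push_cast
      rw [lt_div_iff₀ (by norm_num)]
      push_cast
      linarith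
    · rw [div_le_iff₀ (by norm_num)]
      push_cast
      linarith
  · subst hm
    rw [show ((2 * m + 1 : ℕ) : ℚ) + 1 = ((m + 1 : ℕ) : ℚ) * 2 from by push_cast; ring,
      mul_div_cancel_right₀ _ (by norm_num), Nat.ceil_natCast]
    omega

end CosAux

set_option maxHeartbeats 1000000 in
/-- For `n ≥ 1`, the functionals `m_l(f) = Σ_{k} f(k) cos(2πlk/n)`,
`l ∈ {0, …, ⌈(n+1)/2⌉ − 1}`, are pairwise distinct cosine multiplicative functionals on
`ℓ¹(ℤ/nℤ) = L¹(ℤ/nℤ, count)`, and every cosine multiplicative functional is one of them;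
in particular `Δ(ℓ¹(ℤ/nℤ), ⋆_c)` has exactly `⌈(n+1)/2⌉` elements. -/
theorem cosStructureSpace_zmod (n : ℕ) [NeZero n] :
    ∃ F : Fin ⌈((n : ℚ) + 1) / 2⌉₊ →
        (Lp ℂ 1 (Measure.count : Measure (ZMod n)) →L[ℂ] ℂ),
      (∀ (l : Fin ⌈((n : ℚ) + 1) / 2⌉₊) (f : Lp ℂ 1 (Measure.count : Measure (ZMod n))),
        F l f = ∑ k : ZMod n,
          (f : ZMod n → ℂ) k * (Real.cos (2 * π * (l : ℕ) * (ZMod.val k) / n) : ℂ)) ∧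
      Function.Injective F ∧
      (∀ l, IsCosineMulFunctional Measure.count (F l)) ∧
      (∀ m : Lp ℂ 1 (Measure.count : Measure (ZMod n)) →L[ℂ] ℂ,
        IsCosineMulFunctional Measure.count m → ∃ l, m = F l) ∧
      Nat.card {m : Lp ℂ 1 (Measure.count : Measure (ZMod n)) →L[ℂ] ℂ //
        IsCosineMulFunctional Measure.count m} = ⌈((n : ℚ) + 1) / 2⌉₊ := by

  classical
  have hc : ⌈((n : ℚ) + 1) / 2⌉₊ = n / 2 + 1 := CosAux.ceil_eq n
  set c := ⌈((n : ℚ) + 1) / 2⌉₊ with hcdef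
  set F : Fin c → (Lp ℂ 1 (Measure.count : Measure (ZMod n)) →L[ℂ] ℂ) :=
    fun l => CosAux.fnl (CosAux.C n (l : ℕ)) (CosAux.C_norm_le (l : ℕ)) with hF
  have hformula : ∀ (l : Fin c) (f : Lp ℂ 1 (Measure.count : Measure (ZMod n))),
      F l f = ∑ k : ZMod n,
        (f : ZMod n → ℂ) k * (Real.cos (2 * π * (l : ℕ) * (ZMod.val k) / n) : ℂ) :=
    fun l f => rfl
  have hinj : Function.Injective F := by
    intro l l' h
    by_cases hn1 : n = 1
    · exact Fin.ext (by have h1 := l.isLt; have h2 := l'.isLt; omega)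
    · have h1 := congrArg (fun (T : Lp ℂ 1 (Measure.count : Measure (ZMod n)) →L[ℂ] ℂ)
        => T (CosAux.delta (1 : ZMod n))) h
      simp only [hF, CosAux.fnl_delta] at h1
      have hn2 : 1 < n := by have := NeZero.pos n; omega
      have hval : ZMod.val (1 : ZMod n) = 1 := @ZMod.val_one n ⟨hn2⟩
      rw [CosAux.C, CosAux.C, hval] at h1
      have h2 : Real.cos (2 * π * (l : ℕ) / n) = Real.cos (2 * π * (l' : ℕ) / n) := by
        have := Complex.ofReal_injective h1
        simpa using this
      have hnR : (0 : ℝ) < n := by exact_mod_cast NeZero.pos n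
      have hmem : ∀ j : Fin c, 2 * π * (j : ℕ) / n ∈ Set.Icc 0 π := by
        intro j
        constructor
        · positivity
        · rw [div_le_iff₀ hnR]
          have hj : 2 * (j : ℕ) ≤ n := by have := j.isLt; omega
          have hj' : 2 * ((j : ℕ) : ℝ) ≤ n := by exact_mod_cast hj
          nlinarith [Real.pi_pos]
      have h3 := Real.injOn_cos (hmem l) (hmem l') h2
      rw [div_eq_div_iff (ne_of_gt hnR) (ne_of_gt hnR)] at h3
      have h4 : ((l : ℕ) : ℝ) = ((l' : ℕ) : ℝ) :=
        mul_left_cancel₀ (ne_of_gt (by positivity : (0:ℝ) < 2 * π))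
          (mul_right_cancel₀ (ne_of_gt hnR) h3)
      exact Fin.ext (by exact_mod_cast h4)
  have hcos : ∀ l, IsCosineMulFunctional Measure.count (F l) :=
    fun l => CosAux.isCos_fnl_C (l : ℕ)
  have hcompl : ∀ m : Lp ℂ 1 (Measure.count : Measure (ZMod n)) →L[ℂ] ℂ,
      IsCosineMulFunctional Measure.count m → ∃ l, m = F l := by
    intro m hm
    obtain ⟨l, hl, hchar⟩ := CosAux.exists_char m hm
    obtain ⟨l', hl', hCC⟩ := CosAux.C_reduce l hl
    refine ⟨⟨l', by omega⟩, ?_⟩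
    refine ContinuousLinearMap.ext fun f => ?_
    rw [CosAux.repr m f, hF]
    show _ = CosAux.fnl _ _ f
    rw [CosAux.fnl_apply]
    refine Finset.sum_congr rfl fun k _ => ?_
    rw [hchar k, hCC k]
  refine ⟨F, hformula, hinj, hcos, hcompl, ?_⟩
  have e : Fin c ≃ {m : Lp ℂ 1 (Measure.count : Measure (ZMod n)) →L[ℂ] ℂ //
      IsCosineMulFunctional Measure.count m} :=
    Equiv.ofBijective (fun l => ⟨F l, hcos l⟩)
      ⟨fun a b hab => hinj (congrArg Subtype.val hab),
       fun m => by obtain ⟨l, hl⟩ := hcompl m.1 m.2; exact ⟨l, Subtype.ext hl.symm⟩⟩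
  rw [← Nat.card_congr e]
  simp
end
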